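/- Let α ≥ 0, ε > 0 and β > 0 satisfy ν := α + ε < 2β. Then for every measurable function h : [0,∞) → [0,∞) and every t ≥ 0: e^{αt} (∫₀ᵗ e^{−β(t−s)} h(s) ds)² ≤ (2β − ν)^{-1} ∫₀ᵗ e^{−ε(t−s)} e^{αs} h(s)² ds. -/

import Mathlib

open MeasureTheory

private lemma exp_sq' (x : ℝ) : Real.exp x ^ 2 = Real.exp (2*x) := by
  rw [two_mul, Real.exp_add, sq]

/-- the weighted convolution estimate for the exponentially decaying
kernel.  Both sides live in the extended reals. -/
theorem statement18 (α ε β : ℝ) (hα : 0 ≤ α) (hε : 0 < ε) (hβ : 0 < β)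
    (hν : α + ε < 2*β)
    (h : ℝ → ℝ) (hmeas : Measurable h) (hnonneg : ∀ s, 0 ≤ h s)
    (t : ℝ) (ht : 0 ≤ t) :
    ENNReal.ofReal (Real.exp (α*t)) *
      (∫⁻ s in Set.Ioc (0:ℝ) t, ENNReal.ofReal (Real.exp (-β*(t-s)) * h s))^2
    ≤ ENNReal.ofReal (2*β - (α + ε))⁻¹ *
      ∫⁻ s in Set.Ioc (0:ℝ) t,
        ENNReal.ofReal (Real.exp (-ε*(t-s)) * Real.exp (α*s) * (h s)^2) := by
  set c : ℝ := 2*β - (α + ε) with hc_def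
  have hc : 0 < c := by simp [hc_def]; linarith
  set μ := (volume : Measure ℝ).restrict (Set.Ioc (0:ℝ) t) with hμ
  set f : ℝ → ENNReal := fun s => ENNReal.ofReal (Real.exp (-(c/2)*(t-s))) with hf_def
  set g : ℝ → ENNReal :=
    fun s => ENNReal.ofReal (Real.exp (α*t/2) * Real.exp (-((α+ε)/2)*(t-s)) * h s) with hg_def
  have hfm : AEMeasurable f μ := by
    apply Measurable.aemeasurable
    exact (Real.continuous_exp.comp (by continuity)).measurable.ennreal_ofReal
  have hgm : AEMeasurable g μ := by
    apply Measurable.aemeasurable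
    apply Measurable.ennreal_ofReal
    exact (((measurable_const.mul
      ((Real.continuous_exp.comp (by continuity)).measurable))).mul hmeas)
  have hpq : Real.HolderConjugate 2 2 := Real.HolderConjugate.two_two
  have CS := ENNReal.lintegral_mul_le_Lp_mul_Lq μ hpq hfm hgm
  -- rewrite LHS as (∫ f*g)^2
  have hfg : ∀ s, f s * g s =
      ENNReal.ofReal (Real.exp (α*t/2)) * ENNReal.ofReal (Real.exp (-β*(t-s)) * h s) := by
    intro s
    rw [hf_def, hg_def]
    simp only
    rw [← ENNReal.ofReal_mul (Real.exp_nonneg _), ← ENNReal.ofReal_mul (Real.exp_nonneg _)]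
    congr 1
    have : -(c/2)*(t-s) + -((α+ε)/2)*(t-s) = -β*(t-s) := by rw [hc_def]; ring
    calc Real.exp (-(c/2)*(t-s)) * (Real.exp (α*t/2) * Real.exp (-((α+ε)/2)*(t-s)) * h s)
        = Real.exp (α*t/2) * ((Real.exp (-(c/2)*(t-s)) * Real.exp (-((α+ε)/2)*(t-s))) * h s) := by
          ring
      _ = Real.exp (α*t/2) * (Real.exp (-β*(t-s)) * h s) := by
          rw [← Real.exp_add, this]
  have hLHS : ENNReal.ofReal (Real.exp (α*t)) *
      (∫⁻ s in Set.Ioc (0:ℝ) t, ENNReal.ofReal (Real.exp (-β*(t-s)) * h s))^2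
      = (∫⁻ s, f s * g s ∂μ)^2 := by
    have : (∫⁻ s, f s * g s ∂μ) = ENNReal.ofReal (Real.exp (α*t/2)) *
        ∫⁻ s in Set.Ioc (0:ℝ) t, ENNReal.ofReal (Real.exp (-β*(t-s)) * h s) := by
      rw [hμ]
      rw [lintegral_congr hfg]
      exact lintegral_const_mul' _ _ ENNReal.ofReal_ne_top
    rw [this, mul_pow, ← ENNReal.ofReal_pow (Real.exp_nonneg _), exp_sq']
    congr 2
    ring
  -- bound ∫ f^2
  have hf2 : (∫⁻ s, f s ^ (2:ℝ) ∂μ) ≤ ENNReal.ofReal c⁻¹ := by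
    have heq : ∀ s, f s ^ (2:ℝ) = ENNReal.ofReal (Real.exp (-c*(t-s))) := by
      intro s
      rw [hf_def]
      simp only
      rw [ENNReal.ofReal_rpow_of_nonneg (Real.exp_nonneg _) (by norm_num : (0:ℝ) ≤ 2)]
      congr 1
      rw [Real.rpow_two, exp_sq']
      congr 1
      ring
    rw [lintegral_congr heq, hμ]
    have hcont : Continuous fun s : ℝ => Real.exp (-c*(t-s)) :=
      Real.continuous_exp.comp (by continuity)
    have hint : IntegrableOn (fun s : ℝ => Real.exp (-c*(t-s))) (Set.Ioc 0 t) :=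
      hcont.integrableOn_Ioc
    rw [← ofReal_integral_eq_lintegral_ofReal hint
      (Filter.Eventually.of_forall fun s => Real.exp_nonneg _)]
    apply ENNReal.ofReal_le_ofReal
    have hIoc : ∫ s in Set.Ioc (0:ℝ) t, Real.exp (-c*(t-s))
        = ∫ s in (0:ℝ)..t, Real.exp (-c*(t-s)) := by
      rw [intervalIntegral.integral_of_le ht]
    rw [hIoc]
    have h1 : (∫ s in (0:ℝ)..t, Real.exp (-c*(t-s)))
        = ∫ u in (0:ℝ)..t, Real.exp (-c*u) := by
      have := intervalIntegral.integral_comp_sub_left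
        (a := (0:ℝ)) (b := t) (fun u => Real.exp (-c*u)) t
      simpa using this
    have h2 : (∫ u in (0:ℝ)..t, Real.exp (-c*u)) = (1 - Real.exp (-c*t)) / c := by
      have hne : (-c) ≠ 0 := ne_of_lt (by linarith)
      have := intervalIntegral.integral_comp_mul_left
        (a := (0:ℝ)) (b := t) (fun u => Real.exp u) hne
      simp only [mul_zero, smul_eq_mul] at this
      rw [this, integral_exp, Real.exp_zero]
      field_simp
      ring
    rw [h1, h2]
    rw [div_le_iff₀ hc, inv_mul_cancel₀ (ne_of_gt hc)]
    have := Real.exp_nonneg (-c*t)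
    linarith
  -- identify ∫ g^2 with RHS integral
  have hg2 : (∫⁻ s, g s ^ (2:ℝ) ∂μ) =
      ∫⁻ s in Set.Ioc (0:ℝ) t,
        ENNReal.ofReal (Real.exp (-ε*(t-s)) * Real.exp (α*s) * (h s)^2) := by
    rw [hμ]
    apply lintegral_congr
    intro s
    rw [hg_def]
    simp only
    rw [ENNReal.ofReal_rpow_of_nonneg
      (mul_nonneg (mul_nonneg (Real.exp_nonneg _) (Real.exp_nonneg _)) (hnonneg s))
      (by norm_num : (0:ℝ) ≤ 2)]
    congr 1
    rw [Real.rpow_two]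
    have key : 2*(α*t/2) + 2*(-((α+ε)/2)*(t-s)) = -ε*(t-s) + α*s := by ring
    calc (Real.exp (α*t/2) * Real.exp (-((α+ε)/2)*(t-s)) * h s)^2
        = Real.exp (α*t/2)^2 * Real.exp (-((α+ε)/2)*(t-s))^2 * (h s)^2 := by ring
      _ = Real.exp (2*(α*t/2) + 2*(-((α+ε)/2)*(t-s))) * (h s)^2 := by
          rw [exp_sq', exp_sq', ← Real.exp_add]
      _ = Real.exp (-ε*(t-s)) * Real.exp (α*s) * (h s)^2 := by
          rw [key, Real.exp_add]
  -- put everything together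
  rw [hLHS, ← hg2]
  calc (∫⁻ s, f s * g s ∂μ)^2
      ≤ ((∫⁻ s, f s ^ (2:ℝ) ∂μ) ^ (1/(2:ℝ)) * (∫⁻ s, g s ^ (2:ℝ) ∂μ) ^ (1/(2:ℝ)))^2 := by
        apply pow_le_pow_left' _ 2
        simpa using CS
    _ = (∫⁻ s, f s ^ (2:ℝ) ∂μ) * (∫⁻ s, g s ^ (2:ℝ) ∂μ) := by
        rw [mul_pow, ← ENNReal.rpow_natCast (_ ^ (1/(2:ℝ))) 2,
          ← ENNReal.rpow_natCast (_ ^ (1/(2:ℝ))) 2,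
          ← ENNReal.rpow_mul, ← ENNReal.rpow_mul]
        norm_num
    _ ≤ ENNReal.ofReal c⁻¹ * (∫⁻ s, g s ^ (2:ℝ) ∂μ) := mul_le_mul_left hf2 _
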